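/- Let n ≥ 1 and let N be an n×n complex matrix that is normal (NᴴN = NNᴴ). Let s, ρ, ω be positive real numbers with s ≤ ρω, and suppose every eigenvalue λ of N satisfies |λ| ≤ ρω² and Im(λ) ≤ -sω. Then for every natural number k and every vector r₀ ∈ ℂⁿ there exists a polynomial P ∈ ℂ[X] of degree at most k with P(0) = 1 such that ‖P(N)·r₀‖₂ ≤ μᵏ·‖r₀‖₂, where μ = √(1 - s²/(ρ²ω²)). -/

import Mathlib

open Matrix Polynomial
open scoped Matrix.Norms.L2Operator

noncomputable local instance matCStar {n : ℕ} : CStarAlgebra (Matrix (Fin n) (Fin n) ℂ) :=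
  Matrix.instCStarAlgebra

lemma commute_aeval' {A : Type*} [Ring A] [Algebra ℂ A] {a b : A} (h : Commute a b)
    (p : ℂ[X]) : Commute a (aeval b p) := by
  induction p using Polynomial.induction_on' with
  | add p q hp hq => simpa using hp.add_right hq
  | monomial i c =>
    rw [aeval_monomial]
    exact (Algebra.commute_algebraMap_right c a).mul_right (h.pow_right i)

lemma star_aeval' {A : Type*} [Ring A] [Algebra ℂ A] [StarRing A] [StarModule ℂ A]
    (b : A) (p : ℂ[X]) :
    star (aeval b p) = aeval (star b) (p.map (starRingEnd ℂ)) := by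
  induction p using Polynomial.induction_on' with
  | add p q hp hq => simp [hp, hq]
  | monomial i c =>
    simp only [aeval_monomial, Polynomial.map_monomial, StarMul.star_mul, ← star_pow]
    rw [starRingEnd_apply, ← algebraMap_star_comm, Algebra.commutes]

lemma isStarNormal_aeval' {A : Type*} [Ring A] [Algebra ℂ A] [StarRing A] [StarModule ℂ A]
    {b : A} (hb : IsStarNormal b) (p : ℂ[X]) : IsStarNormal (aeval b p) := by
  constructor
  rw [star_aeval']
  exact (commute_aeval' (commute_aeval' hb.star_comm_self p).symm _).symm

lemma key_ineq (s ρ ω : ℝ) (hs : 0 < s) (hρ : 0 < ρ) (hω : 0 < ω) (hsρω : s ≤ ρ * ω)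
    (l : ℂ) (h1 : ‖l‖ ≤ ρ * ω ^ 2) (h2 : l.im ≤ -(s * ω)) :
    ‖1 - (↑(-(ρ ^ 2 * ω ^ 3 / s)) * Complex.I)⁻¹ * l‖ ≤
      Real.sqrt (1 - s ^ 2 / (ρ ^ 2 * ω ^ 2)) := by
  set a : ℝ := ρ ^ 2 * ω ^ 3 / s with ha_def
  have ha : 0 < a := by positivity
  set c : ℂ := ↑(-a) * Complex.I with hc_def
  have hc0 : c ≠ 0 := by
    simp [hc_def, Complex.ext_iff, Complex.mul_re, Complex.mul_im, ne_of_gt ha, ha.ne']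
  have hcnorm : ‖c‖ = a := by
    rw [hc_def]; simp [abs_of_pos ha]
  have hstep : (1 : ℂ) - c⁻¹ * l = (c - l) / c := by field_simp
  rw [hstep, norm_div, hcnorm, div_le_iff₀ ha]
  have hl2 : l.re ^ 2 + l.im ^ 2 ≤ (ρ * ω ^ 2) ^ 2 := by
    have h := Complex.sq_norm l
    rw [Complex.normSq_apply] at h
    have h1' : ‖l‖ ≤ ρ * ω ^ 2 := h1
    nlinarith [norm_nonneg l]
  have hid : a * (s * ω) = ρ ^ 2 * ω ^ 4 := by
    rw [ha_def]; field_simp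
  have hμ2 : 0 ≤ 1 - s ^ 2 / (ρ ^ 2 * ω ^ 2) := by
    have : s ^ 2 ≤ ρ ^ 2 * ω ^ 2 := by nlinarith
    have h' : s ^ 2 / (ρ ^ 2 * ω ^ 2) ≤ 1 := by
      rw [div_le_one (by positivity)]; exact this
    linarith
  have hnorm2 : ‖c - l‖ ^ 2 ≤ (Real.sqrt (1 - s ^ 2 / (ρ ^ 2 * ω ^ 2)) * a) ^ 2 := by
    have hsq : Real.sqrt (1 - s ^ 2 / (ρ ^ 2 * ω ^ 2)) ^ 2
        = 1 - s ^ 2 / (ρ ^ 2 * ω ^ 2) := Real.sq_sqrt hμ2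
    have hexp : ‖c - l‖ ^ 2 = l.re ^ 2 + (a + l.im) ^ 2 := by
      rw [Complex.sq_norm, Complex.normSq_apply]
      simp [hc_def, Complex.sub_re, Complex.sub_im, Complex.mul_re, Complex.mul_im]
      ring
    rw [hexp, mul_pow, hsq]
    have hrhs : (1 - s ^ 2 / (ρ ^ 2 * ω ^ 2)) * a ^ 2 = a ^ 2 - ρ ^ 2 * ω ^ 4 := by
      rw [ha_def]; field_simp
    rw [hrhs]
    nlinarith [hid, ha, h2, hl2]
  calc ‖c - l‖ = Real.sqrt (‖c - l‖ ^ 2) := (Real.sqrt_sq (norm_nonneg _)).symm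
    _ ≤ Real.sqrt ((Real.sqrt (1 - s ^ 2 / (ρ ^ 2 * ω ^ 2)) * a) ^ 2) :=
        Real.sqrt_le_sqrt hnorm2
    _ = Real.sqrt (1 - s ^ 2 / (ρ ^ 2 * ω ^ 2)) * a :=
        Real.sqrt_sq (by positivity)

theorem gmres_convergence_normal {n : ℕ} (hn : 1 ≤ n)
    (N : Matrix (Fin n) (Fin n) ℂ) (hN : Nᴴ * N = N * Nᴴ)
    (s ρ ω : ℝ) (hs : 0 < s) (hρ : 0 < ρ) (hω : 0 < ω) (hsρω : s ≤ ρ * ω)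
    (hspec : ∀ l ∈ spectrum ℂ N, ‖l‖ ≤ ρ * ω ^ 2 ∧ l.im ≤ -(s * ω)) :
    ∀ (k : ℕ) (r₀ : EuclideanSpace ℂ (Fin n)),
      ∃ P : Polynomial ℂ, P.natDegree ≤ k ∧ P.eval 0 = 1 ∧
        ‖(WithLp.equiv 2 (Fin n → ℂ)).symm
            ((Polynomial.aeval N P).mulVec (WithLp.equiv 2 (Fin n → ℂ) r₀))‖
          ≤ (Real.sqrt (1 - s ^ 2 / (ρ ^ 2 * ω ^ 2))) ^ k * ‖r₀‖ := by
  intro k r₀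
  set μ : ℝ := Real.sqrt (1 - s ^ 2 / (ρ ^ 2 * ω ^ 2)) with hμ_def
  set c : ℂ := ↑(-(ρ ^ 2 * ω ^ 3 / s)) * Complex.I with hc_def
  set P : ℂ[X] := ((1 : ℂ[X]) - C c⁻¹ * X) ^ k with hP_def
  refine ⟨P, ?_, ?_, ?_⟩
  · calc P.natDegree ≤ k * ((1 : ℂ[X]) - C c⁻¹ * X).natDegree := natDegree_pow_le
      _ ≤ k * 1 := by
          refine Nat.mul_le_mul_left k ?_
          refine (natDegree_sub_le _ _).trans ?_
          simpa using (natDegree_C_mul_le c⁻¹ X).trans (by simp)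
      _ = k := mul_one k
  · simp [hP_def]
  · haveI : IsStarNormal N := ⟨hN⟩
    haveI : IsStarNormal (aeval N P) := isStarNormal_aeval' ‹_› P
    haveI : Nonempty (Fin n) := ⟨⟨0, hn⟩⟩
    haveI : Nontrivial (Matrix (Fin n) (Fin n) ℂ) := inferInstance
    have hnon : (spectrum ℂ N).Nonempty :=
      spectrum.nonempty_of_isAlgClosed_of_finiteDimensional ℂ N
    have hμ0 : 0 ≤ μ := Real.sqrt_nonneg _
    have hq : ‖aeval N P‖ ≤ μ ^ k := by
      have h1 : spectralRadius ℂ (aeval N P) ≤ ENNReal.ofReal (μ ^ k) := by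
        rw [spectralRadius]
        refine iSup₂_le fun z hz => ?_
        rw [spectrum.map_polynomial_aeval_of_nonempty N P hnon] at hz
        obtain ⟨l, hl, rfl⟩ := hz
        obtain ⟨hl1, hl2⟩ := hspec l hl
        have hev : eval l P = (1 - c⁻¹ * l) ^ k := by simp [hP_def]
        have hkey : ‖(1 : ℂ) - c⁻¹ * l‖ ≤ μ := key_ineq s ρ ω hs hρ hω hsρω l hl1 hl2
        have : ‖eval l P‖ ≤ μ ^ k := by
          rw [hev, norm_pow]
          exact pow_le_pow_left₀ (norm_nonneg _) hkey k
        rw [← ENNReal.ofReal_coe_nnreal]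
        exact ENNReal.ofReal_le_ofReal (by simpa using this)
      rw [IsStarNormal.spectralRadius_eq_nnnorm (aeval N P)] at h1
      have := ENNReal.toReal_mono (by simp) h1
      simpa [ENNReal.toReal_ofReal (pow_nonneg hμ0 k)] using this
    calc ‖(WithLp.equiv 2 (Fin n → ℂ)).symm
            ((aeval N P).mulVec (WithLp.equiv 2 (Fin n → ℂ) r₀))‖
        ≤ ‖aeval N P‖ * ‖r₀‖ := by exact Matrix.l2_opNorm_mulVec (aeval N P) r₀
      _ ≤ μ ^ k * ‖r₀‖ := mul_le_mul_of_nonneg_right hq (norm_nonneg _)
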